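/- arXiv:1907.05771 — 4 statements merged into one kernel-verified Lean document; each statement's English description precedes it below -/
import Mathlib

section
/- Let c ∈ ℝ, L ∈ ℝ with |c| ≤ L, and suppose z, s ∈ ℝ and y ∈ {0,1} satisfy z - s = c, 0 ≤ z ≤ y·L, and 0 ≤ s ≤ (1-y)·L. Then z = max(0, c). -/
theorem bigM_relu_unique (c L z s y : ℝ) (h : |c| ≤ L)
    (hy : y = 0 ∨ y = 1) (hzs : z - s = c)
    (hz0 : 0 ≤ z) (hzL : z ≤ y * L) (hs0 : 0 ≤ s) (hsL : s ≤ (1 - y) * L) :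
    z = max 0 c := by
  rcases hy with rfl | rfl
  · have hz : z = 0 := by nlinarith
    have hc : c ≤ 0 := by nlinarith
    rw [hz, max_eq_left hc]
  · have hs : s = 0 := by nlinarith
    have hc : 0 ≤ c := by nlinarith
    rw [max_eq_right hc]; linarith
end

section
/- Let c ∈ ℝᵈ and L ∈ ℝ with |c_j| ≤ L for all j. The set of (z, s, y) ∈ ℝᵈ × ℝᵈ × {0,1}ᵈ satisfying z - s = c, 0 ≤ z ≤ y·L, and 0 ≤ s ≤ (1-y)·L (componentwise) is non-empty, and every element of this set satisfies z_j = max(0, c_j) for all j. -/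
theorem bigM_relu_vector (d : ℕ) (c : Fin d → ℝ) (L : ℝ)
    (h : ∀ j, |c j| ≤ L) :
    (∃ z s y : Fin d → ℝ, (∀ j, y j = 0 ∨ y j = 1) ∧
        (∀ j, z j - s j = c j) ∧
        (∀ j, 0 ≤ z j ∧ z j ≤ y j * L) ∧
        (∀ j, 0 ≤ s j ∧ s j ≤ (1 - y j) * L)) ∧
    (∀ z s y : Fin d → ℝ, (∀ j, y j = 0 ∨ y j = 1) →
        (∀ j, z j - s j = c j) →
        (∀ j, 0 ≤ z j ∧ z j ≤ y j * L) →
        (∀ j, 0 ≤ s j ∧ s j ≤ (1 - y j) * L) →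
        ∀ j, z j = max 0 (c j)) := by
  constructor
  · refine ⟨fun j => max 0 (c j), fun j => max 0 (-c j),
      fun j => if 0 < c j then 1 else 0, fun j => ?_, fun j => ?_, fun j => ?_, fun j => ?_⟩
    · by_cases hc : 0 < c j <;> simp [hc]
    · rcases le_or_gt (c j) 0 with hc | hc
      · simp [max_eq_left hc, max_eq_right (neg_nonneg.mpr hc)]
      · simp [max_eq_right hc.le, max_eq_left (neg_nonpos.mpr hc.le)]
    · have h' := (abs_le.mp (h j))
      have hL : (0:ℝ) ≤ L := le_trans (abs_nonneg _) (h j)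
      by_cases hc : 0 < c j <;> simp [hc, max_le_iff] <;> first | (constructor <;> linarith [h'.1, h'.2]) | linarith [h'.1, h'.2]
    · have h' := (abs_le.mp (h j))
      have hL : (0:ℝ) ≤ L := le_trans (abs_nonneg _) (h j)
      by_cases hc : 0 < c j <;> simp [hc, max_le_iff] <;> first | (constructor <;> linarith [h'.1, h'.2]) | linarith [h'.1, h'.2]
  · intro z s y hy hzs hz hs j
    rcases hy j with h0 | h1
    · have h1 := (hz j).2; have h2 := (hz j).1; have h3 := (hs j).1
      have := hzs j
      rw [h0] at h1; simp at h1
      have hz0 : z j = 0 := le_antisymm h1 h2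
      rw [hz0]
      have : c j ≤ 0 := by linarith [hzs j]
      simp [max_eq_left this]
    · have h2 := (hs j).1; have h3 := (hz j).1
      have hs0 : s j = 0 := le_antisymm (by have := (hs j).2; rw [h1] at this; linarith) h2
      have hzc : z j = c j := by have := hzs j; linarith
      rw [hzc]
      exact (max_eq_right (by linarith)).symm
end

section
/- Let N(x) = φ(W^{K-1}φ(...φ(W⁰x + b⁰)...) + b^{K-1}) be a K-layer ReLU network with φ(s) = max(0,s) componentwise, and suppose L bounds the absolute value of every pre-activation for every input x ∈ {0,1}^m. Then for every x ∈ {0,1}^m and every collection (z^k, s^k, y^k)_{k=1..K} satisfying z⁰ = x, z^k - s^k = W^{k-1}z^{k-1} + b^{k-1}, 0 ≤ z^k ≤ y^k·L, 0 ≤ s^k ≤ (1-y^k)·L, y^k binary, the final variable z^K equals N(x); moreover such a collection always exists. -/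
/-- Output of layer `k` of a ReLU network (`layerOut ... 0 = x` is the input). -/
noncomputable def layerOut (d : ℕ → ℕ)
    (W : (k : ℕ) → Matrix (Fin (d (k + 1))) (Fin (d k)) ℝ)
    (b : (k : ℕ) → Fin (d (k + 1)) → ℝ) (x : Fin (d 0) → ℝ) :
    (k : ℕ) → Fin (d k) → ℝ
  | 0 => x
  | k + 1 => fun j => max 0 (((W k).mulVec (layerOut d W b x k) + b k) j)

lemma relu_unique {z s y a L : ℝ} (hy : y = 0 ∨ y = 1) (heq : z - s = a)
    (hz : 0 ≤ z ∧ z ≤ y * L) (hs : 0 ≤ s ∧ s ≤ (1 - y) * L) :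
    z = max 0 a := by
  rcases hy with hy | hy <;> subst hy
  · have hz0 : z = 0 := le_antisymm (by simpa using hz.2) hz.1
    have : a = -s := by linarith
    rw [hz0, this, max_eq_left (by linarith [hs.1])]
  · have hs0 : s = 0 := le_antisymm (by simpa using hs.2) hs.1
    have : z = a := by linarith
    rw [this.symm, max_eq_right hz.1]

theorem deep_relu_mip (K : ℕ) (d : ℕ → ℕ)
    (W : (k : ℕ) → Matrix (Fin (d (k + 1))) (Fin (d k)) ℝ)
    (b : (k : ℕ) → Fin (d (k + 1)) → ℝ) (L : ℝ)
    (hL : ∀ x : Fin (d 0) → ℝ, (∀ j, x j = 0 ∨ x j = 1) →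
      ∀ k < K, ∀ j, |((W k).mulVec (layerOut d W b x k) + b k) j| ≤ L)
    (x : Fin (d 0) → ℝ) (hx : ∀ j, x j = 0 ∨ x j = 1) :
    (∀ z s y : (k : ℕ) → Fin (d k) → ℝ,
        z 0 = x →
        (∀ k < K, ∀ j, y (k + 1) j = 0 ∨ y (k + 1) j = 1) →
        (∀ k < K, ∀ j, z (k + 1) j - s (k + 1) j =
            ((W k).mulVec (z k) + b k) j) →
        (∀ k < K, ∀ j, 0 ≤ z (k + 1) j ∧ z (k + 1) j ≤ y (k + 1) j * L) →
        (∀ k < K, ∀ j, 0 ≤ s (k + 1) j ∧ s (k + 1) j ≤ (1 - y (k + 1) j) * L) →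
        z K = layerOut d W b x K) ∧
    (∃ z s y : (k : ℕ) → Fin (d k) → ℝ,
        z 0 = x ∧
        (∀ k < K, ∀ j, y (k + 1) j = 0 ∨ y (k + 1) j = 1) ∧
        (∀ k < K, ∀ j, z (k + 1) j - s (k + 1) j =
            ((W k).mulVec (z k) + b k) j) ∧
        (∀ k < K, ∀ j, 0 ≤ z (k + 1) j ∧ z (k + 1) j ≤ y (k + 1) j * L) ∧
        (∀ k < K, ∀ j, 0 ≤ s (k + 1) j ∧ s (k + 1) j ≤ (1 - y (k + 1) j) * L)) := by
  constructor
  · intro z s y hz0 hy heq hzb hsb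
    have key : ∀ k ≤ K, z k = layerOut d W b x k := by
      intro k hk
      induction k with
      | zero => simpa [layerOut] using hz0
      | succ n ih =>
        have hn : n < K := Nat.lt_of_succ_le hk
        have ihn := ih (Nat.le_of_lt hn)
        funext j
        have := relu_unique (hy n hn j) (heq n hn j) (hzb n hn j) (hsb n hn j)
        rw [this, ihn]
        rfl
    exact key K le_rfl
  · refine ⟨layerOut d W b x,
      fun k => Nat.rec (motive := fun k => Fin (d k) → ℝ) (fun _ => 0)
        (fun n _ j => max 0 (-(((W n).mulVec (layerOut d W b x n) + b n) j))) k,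
      fun k => Nat.rec (motive := fun k => Fin (d k) → ℝ) (fun _ => 0)
        (fun n _ j => if 0 ≤ ((W n).mulVec (layerOut d W b x n) + b n) j then 1 else 0) k,
      rfl, ?_, ?_, ?_, ?_⟩
    · intro k hk j
      show (if 0 ≤ ((W k).mulVec (layerOut d W b x k) + b k) j then (1:ℝ) else 0) = 0 ∨
        (if 0 ≤ ((W k).mulVec (layerOut d W b x k) + b k) j then (1:ℝ) else 0) = 1
      split_ifs <;> simp
    · intro k hk j
      show max 0 _ - max 0 _ = _
      rcases le_total 0 (((W k).mulVec (layerOut d W b x k) + b k) j) with h | h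
      · rw [max_eq_right h, max_eq_left (by linarith)]; ring
      · rw [max_eq_left h, max_eq_right (by linarith)]; ring
    · intro k hk j
      have hLb := hL x hx k hk j
      have habs := abs_le.mp hLb
      show (0:ℝ) ≤ max 0 (((W k).mulVec (layerOut d W b x k) + b k) j) ∧
        max 0 (((W k).mulVec (layerOut d W b x k) + b k) j) ≤
          (if 0 ≤ ((W k).mulVec (layerOut d W b x k) + b k) j then (1:ℝ) else 0) * L
      by_cases h : 0 ≤ ((W k).mulVec (layerOut d W b x k) + b k) j
      · simp only [if_pos h, one_mul]
        exact ⟨le_max_left _ _, max_le (le_trans h habs.2) habs.2⟩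
      · push_neg at h
        simp only [if_neg (not_le.mpr h), zero_mul]
        exact ⟨le_max_left _ _, le_of_eq (max_eq_left h.le)⟩
    · intro k hk j
      have habs := abs_le.mp (hL x hx k hk j)
      show (0:ℝ) ≤ max 0 (-(((W k).mulVec (layerOut d W b x k) + b k) j)) ∧
        max 0 (-(((W k).mulVec (layerOut d W b x k) + b k) j)) ≤
          (1 - if 0 ≤ ((W k).mulVec (layerOut d W b x k) + b k) j then (1:ℝ) else 0) * L
      by_cases h : 0 ≤ ((W k).mulVec (layerOut d W b x k) + b k) j
      · simp only [if_pos h]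
        refine ⟨le_max_left _ _, ?_⟩
        rw [max_eq_left (by linarith)]
        norm_num
      · push_neg at h
        simp only [if_neg (not_le.mpr h)]
        refine ⟨le_max_left _ _, ?_⟩
        rw [max_eq_right (by linarith)]
        linarith [habs.1]
end

section
/- Let c ∈ ℝ^d, L ∈ ℝ₊ with |c_j| ≤ L for all j, and let P = {(z,s,y) ∈ ℝ^d × ℝ^d × {0,1}^d : z - s = c, 0 ≤ z ≤ y·L, 0 ≤ s ≤ (1-y)·L}. Then the projection of P onto the z-coordinate is the singleton {φ(c)} where φ(c)_j = max(0, c_j). -/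
theorem bigM_relu_projection (d : ℕ) (c : Fin d → ℝ) (L : ℝ) (hL : 0 ≤ L)
    (h : ∀ j, |c j| ≤ L) :
    {z : Fin d → ℝ | ∃ s y : Fin d → ℝ, (∀ j, y j = 0 ∨ y j = 1) ∧
        (∀ j, z j - s j = c j) ∧
        (∀ j, 0 ≤ z j ∧ z j ≤ y j * L) ∧
        (∀ j, 0 ≤ s j ∧ s j ≤ (1 - y j) * L)} =
      {fun j => max 0 (c j)} := by
  ext z
  simp only [Set.mem_setOf_eq, Set.mem_singleton_iff]
  constructor
  · rintro ⟨s, y, hy, hzs, hz, hs⟩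
    funext j
    rcases hy j with h0 | h1
    · have hz0 : z j = 0 := le_antisymm (by simpa [h0] using (hz j).2) (hz j).1
      have : c j ≤ 0 := by
        have := (hs j).1
        nlinarith [hzs j]
      simp [hz0, max_eq_left this]
    · have hs0 : s j = 0 := le_antisymm (by simpa [h1] using (hs j).2) (hs j).1
      have hc : z j = c j := by linarith [hzs j, hs0.symm ▸ hzs j]
      rw [hc.symm, max_eq_right]
      linarith [(hz j).1, hc]
  · rintro rfl
    refine ⟨fun j => max 0 (-c j), fun j => if 0 ≤ c j then 1 else 0, fun j => ?_,
      fun j => ?_, fun j => ?_, fun j => ?_⟩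
    · simp only; split <;> simp
    · rcases le_or_gt 0 (c j) with hcj | hcj
      · simp [max_eq_right hcj, max_eq_left (neg_nonpos_of_nonneg hcj)]
      · simp only []; rw [max_eq_left hcj.le, max_eq_right (by linarith : (0:ℝ) ≤ -c j)]; ring
    · constructor
      · exact le_max_left _ _
      · rcases le_or_gt 0 (c j) with hcj | hcj
        · simp only [if_pos hcj, one_mul, max_le_iff]
          exact ⟨hL, (abs_le.mp (h j)).2⟩
        · simp [if_neg (not_le.mpr hcj), max_eq_left hcj.le]
    · constructor
      · exact le_max_left _ _
      · rcases le_or_gt 0 (c j) with hcj | hcj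
        · simp [if_pos hcj, max_eq_left (neg_nonpos_of_nonneg hcj)]
        · simp only [if_neg (not_le.mpr hcj), sub_zero, one_mul, max_le_iff]
          exact ⟨hL, by linarith [(abs_le.mp (h j)).1]⟩
end
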